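/- Let b : E → ℝ be C¹ on a normed space with b(0) = 0, b(u)/‖u‖² → +∞ as u → 0, b'(u)u ≥ b(u) > 0 for u ≠ 0, and for every u ≠ 0, s ↦ b'(su)u/s non-increasing on (0,∞). Then there exist positive constants α₀ and δ such that b(u) ≥ α₀‖u‖ for all ‖u‖ ≥ δ. -/

import Mathlib

open Filter Topology

private lemma ray_mono (E : Type*) [NormedAddCommGroup E] [NormedSpace ℝ E]
    (b : E → ℝ) (b' : E → E →L[ℝ] ℝ) (hb : ∀ u, HasFDerivAt b (b' u) u)
    (hpos : ∀ u : E, u ≠ 0 → 0 < b u ∧ b u ≤ b' u u)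
    (u : E) (hu : u ≠ 0) :
    MonotoneOn (fun t : ℝ => b (t • u) / t) (Set.Ioi 0) := by
  have hderiv : ∀ t : ℝ, t ≠ 0 → HasDerivAt (fun t : ℝ => b (t • u) / t)
      (((b' (t • u)) u * t - b (t • u) * 1) / t ^ 2) t := by
    intro t ht
    have h1 : HasDerivAt (fun t : ℝ => t • u) ((1:ℝ) • u) t :=
      (hasDerivAt_id t).smul_const u
    rw [one_smul] at h1
    have h2 : HasDerivAt (fun t : ℝ => b (t • u)) ((b' (t • u)) u) t :=
      (hb (t • u)).comp_hasDerivAt t h1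
    exact h2.div (hasDerivAt_id t) ht
  apply monotoneOn_of_deriv_nonneg (convex_Ioi 0)
  · have hbc : Continuous b := continuous_iff_continuousAt.mpr fun x => (hb x).continuousAt
    exact ((hbc.comp (continuous_id.smul continuous_const)).continuousOn).div
      continuousOn_id (fun t ht => ne_of_gt ht)
  · intro t ht
    rw [interior_Ioi] at ht
    exact (hderiv t (ne_of_gt ht)).differentiableAt.differentiableWithinAt
  · intro t ht
    rw [interior_Ioi] at ht
    rw [(hderiv t (ne_of_gt ht)).deriv]
    have htu : t • u ≠ 0 := smul_ne_zero (ne_of_gt ht) hu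
    have hle : b (t • u) ≤ (b' (t • u)) (t • u) := (hpos _ htu).2
    rw [map_smul, smul_eq_mul] at hle
    apply div_nonneg _ (sq_nonneg t)
    nlinarith

/-- Conditions (ii) and (iii) of Theorem 2.2 imply an eventual linear lower bound:
there are `α₀, δ > 0` with `b(u) ≥ α₀‖u‖` for all `‖u‖ ≥ δ`. -/
theorem stmt_15 (E : Type*) [NormedAddCommGroup E] [NormedSpace ℝ E]
    (b : E → ℝ) (b' : E → E →L[ℝ] ℝ) (hb : ∀ u, HasFDerivAt b (b' u) u)
    (hb0 : b 0 = 0)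
    (hblow : Tendsto (fun u => b u / ‖u‖ ^ 2) (𝓝[≠] (0 : E)) atTop)
    (hpos : ∀ u : E, u ≠ 0 → 0 < b u ∧ b u ≤ b' u u)
    (hanti : ∀ u : E, u ≠ 0 →
      AntitoneOn (fun s : ℝ => b' (s • u) u / s) (Set.Ioi 0)) :
    ∃ α₀ > 0, ∃ δ > 0, ∀ u : E, δ ≤ ‖u‖ → α₀ * ‖u‖ ≤ b u := by
  have hev : ∀ᶠ u in 𝓝[≠] (0 : E), 1 ≤ b u / ‖u‖ ^ 2 :=
    hblow.eventually (eventually_ge_atTop 1)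
  rw [eventually_nhdsWithin_iff, Metric.eventually_nhds_iff] at hev
  obtain ⟨ε, hε, hεb⟩ := hev
  set δ : ℝ := ε / 2 with hδdef
  have hδ : 0 < δ := by positivity
  refine ⟨δ, hδ, δ, hδ, fun u hu => ?_⟩
  have hu0 : u ≠ 0 := by
    intro h; rw [h, norm_zero] at hu; linarith
  have hnu : 0 < ‖u‖ := lt_of_lt_of_le hδ hu
  set c : ℝ := δ / ‖u‖ with hcdef
  have hc : 0 < c := div_pos hδ hnu
  have hc1 : c ≤ 1 := (div_le_one hnu).2 hu
  have hv : ‖c • u‖ = δ := by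
    rw [norm_smul, Real.norm_eq_abs, abs_of_pos hc, hcdef,
      div_mul_cancel₀ _ (ne_of_gt hnu)]
  have hvne : c • u ≠ 0 := smul_ne_zero (ne_of_gt hc) hu0
  have hbv : δ ^ 2 ≤ b (c • u) := by
    have hdist : dist (c • u) 0 < ε := by
      rw [dist_zero_right, hv]; linarith
    have := hεb hdist hvne
    rw [hv] at this
    calc δ ^ 2 = 1 * δ ^ 2 := (one_mul _).symm
      _ ≤ b (c • u) / δ ^ 2 * δ ^ 2 := by
          apply mul_le_mul_of_nonneg_right this (by positivity)
      _ = b (c • u) := div_mul_cancel₀ _ (by positivity)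
  have hmono := ray_mono E b b' hb hpos u hu0 (Set.mem_Ioi.2 hc)
    (Set.mem_Ioi.2 one_pos) hc1
  simp only [one_smul, div_one] at hmono
  have : δ ^ 2 / c ≤ b u := le_trans (by gcongr) hmono
  calc δ * ‖u‖ = δ ^ 2 / c := by
        rw [hcdef]; field_simp
    _ ≤ b u := this
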